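/- Let x0, x1, x2, x3, α, β ∈ ℂ with x0−x1−α ≠ 0, x0−x3+β ≠ 0, and x0−x2−α+β ≠ 0. Then α(x0−x3)(x1−x2) − β(x0−x1)(x3−x2) + αβ(α−β) = 0 if and only if ((x0−x1+α)/(x0−x1−α)) · ((x0−x3−β)/(x0−x3+β)) = (x0−x2+α−β)/(x0−x2−α+β). -/
import Mathlib


/-- The multiplicative three-leg form of equation (Q1) with δ = 1,
centered at `x0`. -/
theorem Q1_delta1_threeLeg_form
    (x0 x1 x2 x3 α β : ℂ)
    (h1 : x0 - x1 - α ≠ 0) (h3 : x0 - x3 + β ≠ 0) (h2 : x0 - x2 - α + β ≠ 0) :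
    α * (x0 - x3) * (x1 - x2) - β * (x0 - x1) * (x3 - x2) + α * β * (α - β) = 0 ↔
    ((x0 - x1 + α) / (x0 - x1 - α)) * ((x0 - x3 - β) / (x0 - x3 + β)) =
      (x0 - x2 + α - β) / (x0 - x2 - α + β) := by
  rw [div_mul_div_comm, div_eq_div_iff (mul_ne_zero h1 h3) h2]
  constructor <;> intro h
  · linear_combination 2 * h
  · linear_combination h / 2
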